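/- In the DLSR setup, for every k ∈ ℤ the quantity η^{(k)} satisfies η^{(k)} ≤ √|S| · Σ_{i=0}^{τ̄−1} δ^{(k−i)}, where δ^{(j)} = ‖f^{(j)} − f^{(j−1)}‖ and η^{(k)} = ‖Σ_{u ∈ S} g_u^{(k)}‖ with g_u^{(k)}(v) = (f^{(k)}(u) − f^{(k−τ(u,v))}(u)) · (Pδ_u)(v). -/

import Mathlib

open scoped BigOperators

private lemma euclid_sum_apply {N : ℕ} {ι : Type*} (s : Finset ι)
    (g : ι → EuclideanSpace ℝ (Fin N)) (w : Fin N) :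
    (∑ v ∈ s, g v) w = ∑ v ∈ s, g v w :=
  by rw [WithLp.ofLp_sum]; exact Finset.sum_apply w s _

private lemma euclid_norm_le_of_abs_le {N : ℕ} (x y : EuclideanSpace ℝ (Fin N))
    (h : ∀ w, |x w| ≤ |y w|) : ‖x‖ ≤ ‖y‖ := by
  rw [EuclideanSpace.norm_eq, EuclideanSpace.norm_eq]
  apply Real.sqrt_le_sqrt
  apply Finset.sum_le_sum
  intro w _
  have := h w
  simp only [Real.norm_eq_abs]
  exact pow_le_pow_left₀ (abs_nonneg _) this 2

/-- In the DLSR setup, for every `k ∈ ℤ`,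
`η^{(k)} ≤ √|S| · Σ_{i=0}^{τ̄−1} δ^{(k−i)}` where `δ^{(j)} = ‖f^{(j)} − f^{(j−1)}‖` and
`η^{(k)} = ‖Σ_{u∈S} g_u^{(k)}‖`, `g_u^{(k)}(v) = (f^{(k)}(u) − f^{(k−τ(u,v))}(u))·(Pδ_u)(v)`. -/
theorem eta_le_sqrt_card_sum_delta
    {N : ℕ} (W : Submodule ℝ (EuclideanSpace ℝ (Fin N)))
    (S : Finset (Fin N)) (τ : Fin N → Fin N → ℕ) (τbar : ℕ)
    (hτ : ∀ u ∈ S, ∀ v : Fin N, 1 ≤ τ u v ∧ τ u v ≤ τbar)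
    (f : ℤ → EuclideanSpace ℝ (Fin N)) (k : ℤ) :
    ‖∑ u ∈ S, ∑ v : Fin N, EuclideanSpace.single v
        ((f k u - f (k - τ u v) u) *
          (W.orthogonalProjectionOnto (EuclideanSpace.single u (1 : ℝ)) :
            EuclideanSpace ℝ (Fin N)) v)‖ ≤
      Real.sqrt (S.card : ℝ) *
        ∑ i ∈ Finset.range τbar, ‖f (k - i) - f (k - i - 1)‖ := by
  classical
  set P : Fin N → EuclideanSpace ℝ (Fin N) :=
    fun u => (W.orthogonalProjectionOnto (EuclideanSpace.single u (1 : ℝ)) :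
      EuclideanSpace ℝ (Fin N)) with hPdef
  set D : ℕ → EuclideanSpace ℝ (Fin N) := fun i => f (k - i) - f (k - i - 1) with hDdef
  set Y : ℕ → Fin N → EuclideanSpace ℝ (Fin N) :=
    fun i u => ∑ v : Fin N, EuclideanSpace.single v
      ((if i < τ u v then D i u else 0) * P u v) with hYdef
  have hYapp : ∀ i u w, Y i u w = (if i < τ u w then D i u else 0) * P u w := by
    intro i u w
    rw [hYdef]
    simp only []
    rw [euclid_sum_apply]
    simp [EuclideanSpace.single_apply]
  have hPnorm : ∀ u, ‖P u‖ ≤ 1 := by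
    intro u
    have h1 : ‖W.orthogonalProjectionOnto (EuclideanSpace.single u (1 : ℝ))‖ ≤
        ‖W.orthogonalProjectionOnto‖ * ‖EuclideanSpace.single u (1 : ℝ)‖ :=
      W.orthogonalProjectionOnto.le_opNorm _
    have h2 : ‖EuclideanSpace.single u (1 : ℝ)‖ = 1 := by
      rw [EuclideanSpace.norm_single]; simp
    calc ‖P u‖ = ‖W.orthogonalProjectionOnto (EuclideanSpace.single u (1 : ℝ))‖ := rfl
      _ ≤ ‖W.orthogonalProjectionOnto‖ * ‖EuclideanSpace.single u (1 : ℝ)‖ := h1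
      _ ≤ 1 * 1 := by
          apply mul_le_mul (Submodule.orthogonalProjectionOnto_norm_le W) (le_of_eq h2) (norm_nonneg _)
          exact zero_le_one
      _ = 1 := one_mul 1
  -- Step 1: rewrite each inner sum as a sum over i of Y i u
  have hstep1 : ∀ u ∈ S,
      (∑ v : Fin N, EuclideanSpace.single v ((f k u - f (k - τ u v) u) * P u v)) =
        ∑ i ∈ Finset.range τbar, Y i u := by
    intro u hu
    ext w
    have hL : (∑ v : Fin N, EuclideanSpace.single v ((f k u - f (k - τ u v) u) * P u v)) w
        = (f k u - f (k - τ u w) u) * P u w := by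
      rw [euclid_sum_apply]
      simp [EuclideanSpace.single_apply]
    have hR : (∑ i ∈ Finset.range τbar, Y i u) w
        = ∑ i ∈ Finset.range τbar, (if i < τ u w then D i u else 0) * P u w := by
      rw [euclid_sum_apply]
      exact Finset.sum_congr rfl fun i _ => hYapp i u w
    rw [hL, hR, ← Finset.sum_mul]
    congr 1
    -- telescoping
    have hsub : Finset.range (τ u w) ⊆ Finset.range τbar :=
      Finset.range_subset_range.2 (hτ u hu w).2
    have hzero : ∀ i ∈ Finset.range τbar, i ∉ Finset.range (τ u w) →
        (if i < τ u w then D i u else 0) = 0 := by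
      intro i _ hi
      simp only [Finset.mem_range] at hi
      simp [hi]
    rw [← Finset.sum_subset hsub hzero]
    have htel := Finset.sum_range_sub' (fun i => f (k - i) u) (τ u w)
    simp only [Nat.cast_zero, sub_zero] at htel
    rw [← htel]
    apply Finset.sum_congr rfl
    intro i hi
    simp only [Finset.mem_range] at hi
    rw [if_pos hi, hDdef]
    have : (k - (↑i + 1) : ℤ) = k - ↑i - 1 := by ring
    push_cast
    rw [this]
    rfl
  rw [Finset.sum_congr rfl hstep1, Finset.sum_comm]
  -- Step 2: triangle inequality over i
  calc ‖∑ i ∈ Finset.range τbar, ∑ u ∈ S, Y i u‖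
      ≤ ∑ i ∈ Finset.range τbar, ‖∑ u ∈ S, Y i u‖ := norm_sum_le _ _
    _ ≤ ∑ i ∈ Finset.range τbar, Real.sqrt (S.card : ℝ) * ‖D i‖ := by
        apply Finset.sum_le_sum
        intro i _
        have h1 : ‖∑ u ∈ S, Y i u‖ ≤ ∑ u ∈ S, |D i u| := by
          refine (norm_sum_le _ _).trans (Finset.sum_le_sum fun u _ => ?_)
          have hle : ‖Y i u‖ ≤ ‖D i u • P u‖ := by
            apply euclid_norm_le_of_abs_le
            intro w
            rw [hYapp i u w]
            have : (D i u • P u) w = D i u * P u w := rfl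
            rw [this, abs_mul, abs_mul]
            by_cases h : i < τ u w <;> simp [h, abs_nonneg, mul_nonneg]
          refine hle.trans ?_
          rw [norm_smul, Real.norm_eq_abs]
          calc |D i u| * ‖P u‖ ≤ |D i u| * 1 :=
                mul_le_mul_of_nonneg_left (hPnorm u) (abs_nonneg _)
            _ = |D i u| := mul_one _
        refine h1.trans ?_
        -- Cauchy–Schwarz
        have h2 : (∑ u ∈ S, |D i u|) ^ 2 ≤ (S.card : ℝ) * ∑ u ∈ S, |D i u| ^ 2 :=
          sq_sum_le_card_mul_sum_sq
        have h3 : ∑ u ∈ S, |D i u| ^ 2 ≤ ‖D i‖ ^ 2 := by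
          have : ‖D i‖ ^ 2 = ∑ u : Fin N, |D i u| ^ 2 := by
            rw [EuclideanSpace.norm_eq, Real.sq_sqrt]
            · simp [Real.norm_eq_abs]
            · positivity
          rw [this]
          exact Finset.sum_le_sum_of_subset_of_nonneg (Finset.subset_univ S)
            (fun u _ _ => by positivity)
        have h4 : (∑ u ∈ S, |D i u|) ^ 2 ≤ (S.card : ℝ) * ‖D i‖ ^ 2 :=
          h2.trans (mul_le_mul_of_nonneg_left h3 (by positivity))
        have h5 : (0 : ℝ) ≤ ∑ u ∈ S, |D i u| :=
          Finset.sum_nonneg fun u _ => abs_nonneg _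
        nlinarith [Real.sq_sqrt (show (0:ℝ) ≤ (S.card : ℝ) by positivity),
          Real.sqrt_nonneg (S.card : ℝ), norm_nonneg (D i),
          mul_nonneg (Real.sqrt_nonneg (S.card : ℝ)) (norm_nonneg (D i))]
    _ = Real.sqrt (S.card : ℝ) * ∑ i ∈ Finset.range τbar, ‖D i‖ := by
        rw [Finset.mul_sum]
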